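/- Fix integers r ≥ 3 and d ≥ 2. With respect to the graded reverse lexicographic order > with a_1 > ⋯ > a_d > e_1 > ⋯ > e_{2r−2} > b_1 > ⋯ > b_d, the initial ideal in(I_{G_{r,d}}) of the toric ideal I_{G_{r,d}} is the monomial ideal generated by F_d ∪ H_{r,d} = {a_i b_j : 1 ≤ j < i ≤ d} ∪ {a_i e_2 e_4 ⋯ e_{2r−2} : 1 ≤ i ≤ d}. -/

import Mathlib

open MvPolynomial

/-- The vertices of the graph `G_{r,d}`: `x₁, x₂`, the `y`-vertices `y_1, …, y_d`
(`Vert.y i` is `y_{i+1}`), and the path vertices `z_1, …, z_{2r-3}`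
(`Vert.z j` is `z_{j+1}`). -/
inductive Vert (d r : ℕ) : Type where
  | x1 : Vert d r
  | x2 : Vert d r
  | y : Fin d → Vert d r
  | z : Fin (2 * r - 3) → Vert d r
deriving DecidableEq

/-- The edge variables of `G_{r,d}`: `a_1, …, a_d`, `b_1, …, b_d` and
`e_1, …, e_{2r-2}` (0-indexed: `EVar.a i` is `a_{i+1}`, etc.). -/
inductive EVar (d r : ℕ) : Type where
  | a : Fin d → EVar d r
  | b : Fin d → EVar d r
  | e : Fin (2 * r - 2) → EVar d r
deriving DecidableEq

/-- The image of each edge variable of `G_{r,d}` under `φ_G`: the product of the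
variables of the two endpoints of the corresponding edge.  Here
`a_i = {x₁, y_i}`, `b_i = {x₂, y_i}`, `e_1 = {x₁, z_1}`,
`e_j = {z_{j-1}, z_j}` for `2 ≤ j ≤ 2r-3` and `e_{2r-2} = {z_{2r-3}, x₂}`. -/
noncomputable def edgeImage (k : Type) [Field k] (d r : ℕ) :
    EVar d r → MvPolynomial (Vert d r) k
  | .a i => X Vert.x1 * X (Vert.y i)
  | .b i => X Vert.x2 * X (Vert.y i)
  | .e t =>
      (if h : t.val = 0 then X Vert.x1
        else X (Vert.z ⟨t.val - 1, by have := t.isLt; omega⟩)) *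
      (if h : t.val = 2 * r - 3 then X Vert.x2
        else X (Vert.z ⟨t.val, by have := t.isLt; omega⟩))

/-- The toric ideal `I_{G_{r,d}}` of the graph `G_{r,d}`, viewed in the polynomial
ring `k[a_1,…,a_d,b_1,…,b_d,e_1,…,e_{2r-2}]`: the kernel of the `k`-algebra map
`φ : k[a_1,…,e_{2r-2}] → k[x₁,x₂,y_1,…,y_d,z_1,…,z_{2r-3}]` sending each edge
variable to the product of its endpoint variables. -/
noncomputable def toricIdealGrd (k : Type) [Field k] (d r : ℕ) :
    Ideal (MvPolynomial (EVar d r) k) :=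
  RingHom.ker (MvPolynomial.aeval (edgeImage k d r)).toRingHom

/-- The monomial `e_2 e_4 ⋯ e_{2r-2}` (product of the even-indexed `e`-variables;
in the 0-indexed encoding these are the `EVar.e t` with `t.val` odd). -/
noncomputable def evenEProd (k : Type) [Field k] (d r : ℕ) : MvPolynomial (EVar d r) k :=
  ∏ t ∈ Finset.univ.filter (fun t : Fin (2 * r - 2) => t.val % 2 = 1), X (EVar.e t)

/-- The monomial `e_1 e_3 ⋯ e_{2r-3}` (product of the odd-indexed `e`-variables;
in the 0-indexed encoding these are the `EVar.e t` with `t.val` even). -/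
noncomputable def oddEProd (k : Type) [Field k] (d r : ℕ) : MvPolynomial (EVar d r) k :=
  ∏ t ∈ Finset.univ.filter (fun t : Fin (2 * r - 2) => t.val % 2 = 0), X (EVar.e t)

open MvPolynomial

/-- Total degree of an exponent vector. -/
def expDeg {σ : Type} (μ : σ →₀ ℕ) : ℕ := μ.sum fun _ n => n

/-- The graded reverse lexicographic order on exponent vectors, determined by a
rank function `rk` on the variables (`rk x < rk y` means `x > y` as variables).
`grevlexLT rk μ ν` holds iff `μ < ν` in grevlex: either `μ` has smaller total
degree, or the degrees agree and at the smallest variable (largest rank) where the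
exponents differ, `μ` has the *larger* exponent. -/
def grevlexLT {σ : Type} (rk : σ → ℕ) (μ ν : σ →₀ ℕ) : Prop :=
  expDeg μ < expDeg ν ∨
    (expDeg μ = expDeg ν ∧ ∃ x, ν x < μ x ∧ ∀ y, rk x < rk y → μ y = ν y)

/-- The initial ideal of `I` with respect to the monomial order `grevlexLT rk`:
the ideal generated by the leading monomials of the nonzero elements of `I`. -/
noncomputable def initialIdeal {σ k : Type} [Field k] (rk : σ → ℕ)
    (I : Ideal (MvPolynomial σ k)) : Ideal (MvPolynomial σ k) :=
  Ideal.span {p | ∃ f ∈ I, f ≠ 0 ∧ ∃ μ ∈ f.support,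
    (∀ ν ∈ f.support, ν ≠ μ → grevlexLT rk ν μ) ∧ p = (monomial μ (1 : k))}

/-- The rank function realizing the variable order
`a_1 > ⋯ > a_d > e_1 > ⋯ > e_{2r-2} > b_1 > ⋯ > b_d` (smaller rank = larger variable). -/
def rankGrd (d r : ℕ) : EVar d r → ℕ
  | .a i => i.val
  | .e t => d + t.val
  | .b i => d + (2 * r - 2) + i.val

section Aux
variable {k : Type} [Field k] {d r : ℕ}

/-- Equivalence of `EVar d r` with a sum type, to get a `Fintype` instance. -/
def evarEquiv (d r : ℕ) : EVar d r ≃ (Fin d ⊕ Fin d ⊕ Fin (2 * r - 2)) where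
  toFun x := match x with
    | .a i => Sum.inl i
    | .b i => Sum.inr (Sum.inl i)
    | .e t => Sum.inr (Sum.inr t)
  invFun s := match s with
    | Sum.inl i => .a i
    | Sum.inr (Sum.inl i) => .b i
    | Sum.inr (Sum.inr t) => .e t
  left_inv x := by cases x <;> rfl
  right_inv s := by rcases s with i | i | t <;> rfl

noncomputable instance : Fintype (EVar d r) := Fintype.ofEquiv _ (evarEquiv d r).symm

lemma sum_evar {M : Type*} [AddCommMonoid M] (F : EVar d r → M) :
    ∑ x : EVar d r, F x =
      (∑ i : Fin d, F (.a i)) + (∑ i : Fin d, F (.b i)) + (∑ t : Fin (2 * r - 2), F (.e t)) := by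
  rw [← Equiv.sum_comp (evarEquiv d r).symm F]
  rw [Fintype.sum_sum_type]
  rw [Fintype.sum_sum_type]
  simp [evarEquiv, add_assoc]

/-- The exponent vector of the image of an edge variable. -/
noncomputable def wtE (d r : ℕ) : EVar d r → (Vert d r →₀ ℕ)
  | .a i => Finsupp.single Vert.x1 1 + Finsupp.single (Vert.y i) 1
  | .b i => Finsupp.single Vert.x2 1 + Finsupp.single (Vert.y i) 1
  | .e t =>
      (if _ : t.val = 0 then Finsupp.single Vert.x1 1
        else Finsupp.single (Vert.z ⟨t.val - 1, by have := t.isLt; omega⟩) 1) +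
      (if _ : t.val = 2 * r - 3 then Finsupp.single Vert.x2 1
        else Finsupp.single (Vert.z ⟨t.val, by have := t.isLt; omega⟩) 1)

lemma edgeImage_eq (x : EVar d r) :
    edgeImage k d r x = monomial (wtE d r x) 1 := by
  have hX : ∀ v : Vert d r, (X v : MvPolynomial (Vert d r) k) = monomial (Finsupp.single v 1) 1 :=
    fun v => rfl
  cases x with
  | a i => simp [edgeImage, wtE, hX, monomial_mul]
  | b i => simp [edgeImage, wtE, hX, monomial_mul]
  | e t =>
      simp only [edgeImage, wtE]
      split_ifs <;> simp [hX, monomial_mul]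

lemma prod_monomial {σ τ : Type} (s : Finset τ) (h : τ → (σ →₀ ℕ)) :
    (∏ x ∈ s, (monomial (h x) (1 : k))) = monomial (∑ x ∈ s, h x) 1 := by
  classical
  induction s using Finset.induction with
  | empty => simp [monomial_zero']
  | insert _ _ hx ih => rename_i a s'; rw [Finset.prod_insert hx, ih, Finset.sum_insert hx,
      monomial_mul, one_mul]

lemma prod_X_eq_monomial {σ τ : Type} (s : Finset τ) (f : τ → σ) :
    (∏ x ∈ s, (X (f x) : MvPolynomial σ k)) =
      monomial (∑ x ∈ s, Finsupp.single (f x) 1) 1 := by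
  rw [← prod_monomial]; rfl

/-- The exponent vector of `φ(x^μ)`. -/
noncomputable def Wt (d r : ℕ) (μ : EVar d r →₀ ℕ) : Vert d r →₀ ℕ :=
  μ.sum fun x n => n • wtE d r x

lemma aeval_monomial_Wt (μ : EVar d r →₀ ℕ) (c : k) :
    aeval (edgeImage k d r) (monomial μ c) = monomial (Wt d r μ) c := by
  rw [MvPolynomial.aeval_monomial]
  have : (μ.prod fun x e => edgeImage k d r x ^ e) = monomial (Wt d r μ) 1 := by
    unfold Finsupp.prod
    have h : ∀ x ∈ μ.support, edgeImage k d r x ^ μ x = monomial (μ x • wtE d r x) (1 : k) :=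
      fun x _ => by rw [edgeImage_eq, monomial_pow, one_pow]
    rw [Finset.prod_congr rfl h, prod_monomial]
    rfl
  rw [this]
  rw [algebraMap_eq, C_mul_monomial, mul_one]

end Aux
section Aux2
variable {k : Type} [Field k] {d r : ℕ}

/-- `expDeg` as an additive monoid hom. -/
noncomputable def expDegHom (σ : Type) : (σ →₀ ℕ) →+ ℕ := Finsupp.liftAddHom (fun _ => AddMonoidHom.id ℕ)

lemma expDeg_eq_hom {σ : Type} (μ : σ →₀ ℕ) : expDeg μ = expDegHom σ μ := by
  rw [expDegHom, Finsupp.liftAddHom_apply]; rfl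

lemma expDeg_single {σ : Type} (v : σ) (n : ℕ) : expDeg (Finsupp.single v n) = n := by
  rw [expDeg, Finsupp.sum_single_index]; rfl

lemma expDeg_add {σ : Type} (w₁ w₂ : σ →₀ ℕ) : expDeg (w₁ + w₂) = expDeg w₁ + expDeg w₂ := by
  simp only [expDeg_eq_hom, map_add]

lemma expDeg_wtE (x : EVar d r) : expDeg (wtE d r x) = 2 := by
  cases x with
  | a i => rw [wtE, expDeg_add, expDeg_single, expDeg_single]
  | b i => rw [wtE, expDeg_add, expDeg_single, expDeg_single]
  | e t => rw [wtE]; split_ifs <;> rw [expDeg_add, expDeg_single, expDeg_single]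

lemma expDeg_Wt (μ : EVar d r →₀ ℕ) : expDeg (Wt d r μ) = 2 * expDeg μ := by
  rw [Wt, expDeg_eq_hom, map_finsuppSum]
  have h : ∀ x ∈ μ.support, expDegHom (Vert d r) (μ x • wtE d r x) = μ x * 2 := by
    intro x _
    rw [map_nsmul, ← expDeg_eq_hom, expDeg_wtE, smul_eq_mul]
  rw [Finsupp.sum, Finset.sum_congr rfl h, ← Finset.sum_mul, mul_comm]
  rfl

lemma Wt_apply (μ : EVar d r →₀ ℕ) (v : Vert d r) :
    Wt d r μ v = ∑ x : EVar d r, μ x * (wtE d r x v) := by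
  rw [Wt, Finsupp.sum_apply, Finsupp.sum_fintype]
  · simp [Finsupp.smul_apply]
  · intro x; simp

lemma Wt_y (μ : EVar d r →₀ ℕ) (i : Fin d) :
    Wt d r μ (Vert.y i) = μ (.a i) + μ (.b i) := by
  rw [Wt_apply, sum_evar]
  have ha : ∀ i' : Fin d, wtE d r (EVar.a i') (Vert.y i) = if i' = i then 1 else 0 := by
    intro i'; simp [wtE, Finsupp.single_apply]
  have hb : ∀ i' : Fin d, wtE d r (EVar.b i') (Vert.y i) = if i' = i then 1 else 0 := by
    intro i'; simp [wtE, Finsupp.single_apply]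
  have he : ∀ t : Fin (2 * r - 2), wtE d r (EVar.e t) (Vert.y i) = 0 := by
    intro t; rw [wtE]; split_ifs <;> simp [Finsupp.single_apply]
  simp only [ha, hb, he, mul_ite, mul_one, mul_zero]
  rw [Finset.sum_ite_eq' Finset.univ i, Finset.sum_ite_eq' Finset.univ i]
  simp

lemma Wt_x1 (hr : 3 ≤ r) (μ : EVar d r →₀ ℕ) :
    Wt d r μ Vert.x1 = (∑ i : Fin d, μ (.a i)) + μ (.e ⟨0, by omega⟩) := by
  rw [Wt_apply, sum_evar]
  have ha : ∀ i' : Fin d, wtE d r (EVar.a i') Vert.x1 = 1 := by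
    intro i'; simp [wtE, Finsupp.single_apply]
  have hb : ∀ i' : Fin d, wtE d r (EVar.b i') Vert.x1 = 0 := by
    intro i'; simp [wtE, Finsupp.single_apply]
  have he : ∀ t : Fin (2 * r - 2),
      wtE d r (EVar.e t) Vert.x1 = if t = (⟨0, by omega⟩ : Fin (2 * r - 2)) then 1 else 0 := by
    intro t; obtain ⟨tv, ht⟩ := t; rw [wtE, Finsupp.add_apply]
    split_ifs <;> simp_all [Finsupp.single_apply, Fin.mk.injEq] <;> omega
  simp only [ha, hb, he, mul_ite, mul_one, mul_zero]
  rw [Finset.sum_ite_eq' Finset.univ]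
  simp

lemma Wt_x2 (hr : 3 ≤ r) (μ : EVar d r →₀ ℕ) :
    Wt d r μ Vert.x2 = (∑ i : Fin d, μ (.b i)) + μ (.e ⟨2 * r - 3, by omega⟩) := by
  rw [Wt_apply, sum_evar]
  have ha : ∀ i' : Fin d, wtE d r (EVar.a i') Vert.x2 = 0 := by
    intro i'; simp [wtE, Finsupp.single_apply]
  have hb : ∀ i' : Fin d, wtE d r (EVar.b i') Vert.x2 = 1 := by
    intro i'; simp [wtE, Finsupp.single_apply]
  have he : ∀ t : Fin (2 * r - 2),
      wtE d r (EVar.e t) Vert.x2 =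
        if t = (⟨2 * r - 3, by omega⟩ : Fin (2 * r - 2)) then 1 else 0 := by
    intro t; obtain ⟨tv, ht⟩ := t; rw [wtE, Finsupp.add_apply]
    split_ifs <;> simp_all [Finsupp.single_apply, Fin.mk.injEq] <;> omega
  simp only [ha, hb, he, mul_ite, mul_one, mul_zero]
  rw [Finset.sum_ite_eq' Finset.univ]
  simp

lemma Wt_z (hr : 3 ≤ r) (μ : EVar d r →₀ ℕ) (s : Fin (2 * r - 3)) :
    Wt d r μ (Vert.z s) =
      μ (.e ⟨s.val, by have := s.isLt; omega⟩) +
      μ (.e ⟨s.val + 1, by have := s.isLt; omega⟩) := by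
  obtain ⟨sv, hsv⟩ := s
  rw [Wt_apply, sum_evar]
  have ha : ∀ i' : Fin d, wtE d r (EVar.a i') (Vert.z ⟨sv, hsv⟩) = 0 := by
    intro i'; simp [wtE, Finsupp.single_apply]
  have hb : ∀ i' : Fin d, wtE d r (EVar.b i') (Vert.z ⟨sv, hsv⟩) = 0 := by
    intro i'; simp [wtE, Finsupp.single_apply]
  have he : ∀ t : Fin (2 * r - 2),
      wtE d r (EVar.e t) (Vert.z ⟨sv, hsv⟩) =
        (if t = (⟨sv, by omega⟩ : Fin (2 * r - 2)) then 1 else 0) +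
        (if t = (⟨sv + 1, by omega⟩ : Fin (2 * r - 2)) then 1 else 0) := by
    intro t; obtain ⟨tv, ht⟩ := t; rw [wtE, Finsupp.add_apply]
    split_ifs <;>
      simp only [Finsupp.single_apply, Vert.z.injEq, Fin.mk.injEq, reduceCtorEq,
        if_false, if_true, Fin.mk.injEq] at * <;>
      first
        | (split_ifs <;> omega)
        | omega
  simp only [ha, hb, he, mul_add, mul_ite, mul_one, mul_zero]
  rw [Finset.sum_add_distrib, Finset.sum_ite_eq' Finset.univ, Finset.sum_ite_eq' Finset.univ]
  simp

end Aux2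
section Aux3
variable {k : Type} [Field k] {d r : ℕ}

lemma exists_same_Wt {f : MvPolynomial (EVar d r) k} (hf : aeval (edgeImage k d r) f = 0)
    {μ : EVar d r →₀ ℕ} (hμ : μ ∈ f.support) :
    ∃ ν ∈ f.support, ν ≠ μ ∧ Wt d r ν = Wt d r μ := by
  by_contra hcon
  push_neg at hcon
  have hsum : aeval (edgeImage k d r) f =
      ∑ ν ∈ f.support, monomial (Wt d r ν) (coeff ν f) := by
    conv_lhs => rw [f.as_sum]
    rw [map_sum]
    exact Finset.sum_congr rfl fun ν _ => aeval_monomial_Wt ν _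
  have h0 : coeff (Wt d r μ) (aeval (edgeImage k d r) f) = coeff μ f := by
    rw [hsum, MvPolynomial.coeff_sum]
    rw [Finset.sum_eq_single μ]
    · rw [coeff_monomial, if_pos rfl]
    · intro ν hν hνμ
      rw [coeff_monomial, if_neg (hcon ν hν hνμ)]
    · intro h; exact absurd hμ h
  rw [hf] at h0
  simp only [coeff_zero] at h0
  exact (MvPolynomial.mem_support_iff.mp hμ) h0.symm

lemma rankGrd_inj : Function.Injective (rankGrd d r) := by
  intro x y h
  cases x <;> cases y <;>
    simp only [rankGrd] at h <;>
    first
      | (congr 1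
         exact Fin.ext (by omega))
      | (exfalso
         first
           | (rename_i i t; have := i.isLt; have := t.isLt; omega)
           | (rename_i t i; have := i.isLt; have := t.isLt; omega))

lemma grevlexLT_asymm {σ : Type} {rk : σ → ℕ} (hrk : Function.Injective rk)
    {μ ν : σ →₀ ℕ} (h1 : grevlexLT rk μ ν) (h2 : grevlexLT rk ν μ) : False := by
  rcases h1 with h1 | ⟨hd1, x, hx, hxa⟩ <;> rcases h2 with h2 | ⟨hd2, x', hx', hxa'⟩
  · omega
  · omega
  · omega
  · rcases lt_trichotomy (rk x) (rk x') with h | h | h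
    · have := hxa x' h; omega
    · have := hrk h; subst this; omega
    · have := hxa' x h; omega

/-- Key combinatorial lemma: if `μ` is a standard monomial (w.r.t. the claimed
Gröbner basis) and `ν ≠ μ` has the same image exponent vector, then `μ < ν`. -/
lemma standard_lt (hr : 3 ≤ r) {μ ν : EVar d r →₀ ℕ} (hne : μ ≠ ν)
    (hW : Wt d r μ = Wt d r ν)
    (S1 : ∀ i j : Fin d, j < i → μ (.a i) = 0 ∨ μ (.b j) = 0)
    (S2 : ∀ i : Fin d, μ (.a i) ≠ 0 →
      ∃ t : Fin (2 * r - 2), t.val % 2 = 1 ∧ μ (.e t) = 0) :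
    grevlexLT (rankGrd d r) μ ν := by
  have hdeg : expDeg μ = expDeg ν := by
    have h := congrArg expDeg hW
    rw [expDeg_Wt, expDeg_Wt] at h
    omega
  have hy : ∀ i : Fin d, μ (.a i) + μ (.b i) = ν (.a i) + ν (.b i) := fun i => by
    have h := DFunLike.congr_fun hW (Vert.y i); rwa [Wt_y, Wt_y] at h
  have hz : ∀ s : Fin (2 * r - 3),
      μ (.e ⟨s.val, by have := s.isLt; omega⟩) + μ (.e ⟨s.val + 1, by have := s.isLt; omega⟩) =
      ν (.e ⟨s.val, by have := s.isLt; omega⟩) + ν (.e ⟨s.val + 1, by have := s.isLt; omega⟩) :=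
    fun s => by
      have h := DFunLike.congr_fun hW (Vert.z s); rwa [Wt_z hr, Wt_z hr] at h
  have hx1 : (∑ i : Fin d, μ (.a i)) + μ (.e ⟨0, by omega⟩) =
      (∑ i : Fin d, ν (.a i)) + ν (.e ⟨0, by omega⟩) := by
    have h := DFunLike.congr_fun hW Vert.x1; rwa [Wt_x1 hr, Wt_x1 hr] at h
  set c : ℤ := (μ (.e ⟨0, by omega⟩) : ℤ) - (ν (.e ⟨0, by omega⟩) : ℤ) with hc
  have halt : ∀ n (h : n < 2 * r - 2),
      (μ (.e ⟨n, h⟩) : ℤ) - (ν (.e ⟨n, h⟩) : ℤ) = (-1) ^ n * c := by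
    intro n
    induction n with
    | zero => intro h; simp [hc]
    | succ m ih =>
      intro h
      have hm : m < 2 * r - 2 := by omega
      have hs : m < 2 * r - 3 := by omega
      have hzz := hz ⟨m, hs⟩
      have hzz' : (μ (.e ⟨m, hm⟩) : ℤ) + (μ (.e ⟨m + 1, h⟩) : ℤ) =
          (ν (.e ⟨m, hm⟩) : ℤ) + (ν (.e ⟨m + 1, h⟩) : ℤ) := by exact_mod_cast hzz
      have ihm := ih hm
      rw [pow_succ]
      linarith
  have hSa : (∑ i : Fin d, (μ (.a i) : ℤ)) - (∑ i : Fin d, (ν (.a i) : ℤ)) = -c := by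
    have h1 : ((∑ i : Fin d, μ (.a i) : ℕ) : ℤ) + (μ (.e ⟨0, by omega⟩) : ℤ) =
        ((∑ i : Fin d, ν (.a i) : ℕ) : ℤ) + (ν (.e ⟨0, by omega⟩) : ℤ) := by
      exact_mod_cast hx1
    push_cast at h1
    linarith
  by_cases hcneg : c < 0
  · -- c < 0 : impossible by S2
    exfalso
    have hex : ∃ i : Fin d, (ν (.a i) : ℤ) < (μ (.a i) : ℤ) := by
      by_contra hno
      push_neg at hno
      have hle : (∑ i : Fin d, ((μ (.a i) : ℤ) - (ν (.a i) : ℤ))) ≤ 0 :=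
        Finset.sum_nonpos fun i _ => by have := hno i; linarith
      rw [Finset.sum_sub_distrib] at hle
      omega
    obtain ⟨i, hi⟩ := hex
    obtain ⟨t, ht1, ht2⟩ := S2 i (by omega)
    have h := halt t.val t.isLt
    have hne1 : ((-1 : ℤ)) ^ t.val = -1 := Odd.neg_one_pow (Nat.odd_iff.mpr ht1)
    rw [Fin.eta, ht2, hne1] at h
    have hnn : (0 : ℤ) ≤ ν (.e t) := Nat.cast_nonneg _
    push_cast at h
    linarith
  · -- 0 ≤ c
    push_neg at hcneg
    have hexne : ∃ i : Fin d, μ (.a i) ≠ ν (.a i) := by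
      by_contra hno
      push_neg at hno
      have hsumeq : (∑ i : Fin d, (μ (.a i) : ℤ)) = (∑ i : Fin d, (ν (.a i) : ℤ)) :=
        Finset.sum_congr rfl fun i _ => by rw [hno i]
      have hc0 : c = 0 := by omega
      apply hne
      ext x
      cases x with
      | a i => exact hno i
      | b i => have h1 := hy i; have h2 := hno i; omega
      | e t =>
        have h := halt t.val t.isLt
        rw [Fin.eta, hc0, mul_zero] at h
        omega
    -- J := the largest index where the a-exponents differ
    have hss : (Finset.univ.filter fun i : Fin d => μ (.a i) ≠ ν (.a i)).Nonempty := by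
      obtain ⟨i, hi⟩ := hexne
      exact ⟨i, Finset.mem_filter.mpr ⟨Finset.mem_univ i, hi⟩⟩
    set J := (Finset.univ.filter fun i : Fin d => μ (.a i) ≠ ν (.a i)).max' hss with hJdef
    have hJmem : μ (.a J) ≠ ν (.a J) := by
      have := Finset.max'_mem _ hss
      exact (Finset.mem_filter.mp this).2
    have hJtop : ∀ j : Fin d, μ (.a j) ≠ ν (.a j) → j ≤ J := fun j hj =>
      Finset.le_max' _ j (Finset.mem_filter.mpr ⟨Finset.mem_univ j, hj⟩)
    by_cases hJ : ν (.a J) < μ (.a J)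
    · -- leading a-difference is positive: contradiction with S1
      exfalso
      have hex2 : ∃ j : Fin d, μ (.a j) < ν (.a j) := by
        by_contra hno
        push_neg at hno
        have hsum2 : (∑ i : Fin d, ((μ (.a i) : ℤ) - (ν (.a i) : ℤ))) ≤ 0 := by
          rw [Finset.sum_sub_distrib]; omega
        have hsingle : ((μ (.a J) : ℤ) - (ν (.a J) : ℤ)) ≤
            (∑ i : Fin d, ((μ (.a i) : ℤ) - (ν (.a i) : ℤ))) :=
          Finset.single_le_sum (f := fun i => ((μ (.a i) : ℤ) - (ν (.a i) : ℤ)))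
            (fun i _ => by have := hno i; push_cast; omega) (Finset.mem_univ J)
        omega
      obtain ⟨j, hj⟩ := hex2
      have hjJ : j < J := lt_of_le_of_ne (hJtop j (by omega)) (by rintro rfl; omega)
      rcases S1 J j hjJ with h | h
      · omega
      · have := hy j; omega
    · -- leading a-difference is negative: grevlex witness b_J
      have hJneg : μ (.a J) < ν (.a J) := by omega
      right
      refine ⟨hdeg, EVar.b J, ?_, ?_⟩
      · have := hy J; omega
      · intro y hy'
        cases y with
        | a i => exfalso; have := i.isLt; simp only [rankGrd] at hy'; omega
        | e t => exfalso; have := t.isLt; simp only [rankGrd] at hy'; omega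
        | b j =>
          simp only [rankGrd] at hy'
          have hJj : J < j := by
            have : J.val < j.val := by omega
            exact this
          have haeq : μ (.a j) = ν (.a j) := by
            by_contra hcon
            exact absurd (hJtop j hcon) (not_le.mpr hJj)
          have := hy j
          omega
section Aux4
variable {k : Type} [Field k] {d r : ℕ}

lemma filter_odd_range (n : ℕ) :
    (Finset.range (2 * n)).filter (fun j => j % 2 = 1) =
      (Finset.range n).image (fun k => 2 * k + 1) := by
  ext j
  simp only [Finset.mem_filter, Finset.mem_image, Finset.mem_range]
  constructor
  · rintro ⟨h1, h2⟩; exact ⟨j / 2, by omega, by omega⟩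
  · rintro ⟨m, hm, rfl⟩; omega

lemma filter_even_range (n : ℕ) :
    (Finset.range (2 * n)).filter (fun j => j % 2 = 0) =
      (Finset.range n).image (fun k => 2 * k) := by
  ext j
  simp only [Finset.mem_filter, Finset.mem_image, Finset.mem_range]
  constructor
  · rintro ⟨h1, h2⟩; exact ⟨j / 2, by omega, by omega⟩
  · rintro ⟨m, hm, rfl⟩; omega

lemma prod_fin_filter {M : Type*} [CommMonoid M] {n : ℕ} (p : ℕ → Prop) [DecidablePred p]
    (g : Fin n → M) :
    ∏ t ∈ Finset.univ.filter (fun t : Fin n => p t.val), g t =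
      ∏ j ∈ (Finset.range n).filter p, (if h : j < n then g ⟨j, h⟩ else 1) := by
  rw [Finset.prod_filter, Finset.prod_filter,
    ← Fin.prod_univ_eq_prod_range (fun j => if p j then (if h : j < n then g ⟨j, h⟩ else 1) else 1) n]
  apply Finset.prod_congr rfl
  intro t _
  by_cases hp : p t.val <;> simp [hp, t.isLt]

lemma sum_fin_filter {M : Type*} [AddCommMonoid M] {n : ℕ} (p : ℕ → Prop) [DecidablePred p]
    (g : Fin n → M) :
    ∑ t ∈ Finset.univ.filter (fun t : Fin n => p t.val), g t =
      ∑ j ∈ (Finset.range n).filter p, (if h : j < n then g ⟨j, h⟩ else 0) := by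
  rw [Finset.sum_filter, Finset.sum_filter,
    ← Fin.sum_univ_eq_sum_range (fun j => if p j then (if h : j < n then g ⟨j, h⟩ else 0) else 0) n]
  apply Finset.sum_congr rfl
  intro t _
  by_cases hp : p t.val <;> simp [hp, t.isLt]

lemma card_filter_odd (hr : 3 ≤ r) :
    (Finset.univ.filter (fun t : Fin (2 * r - 2) => t.val % 2 = 1)).card = r - 1 := by
  rw [Finset.card_eq_sum_ones, sum_fin_filter (fun j => j % 2 = 1) (fun _ => (1 : ℕ))]
  have h2 : 2 * r - 2 = 2 * (r - 1) := by omega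
  rw [Finset.sum_congr rfl (fun j hj => by
    rw [dif_pos (Finset.mem_range.mp (Finset.mem_filter.mp hj).1)])]
  rw [← Finset.card_eq_sum_ones, h2, filter_odd_range,
    Finset.card_image_of_injective _ (fun x y h => by omega), Finset.card_range]

lemma card_filter_even (hr : 3 ≤ r) :
    (Finset.univ.filter (fun t : Fin (2 * r - 2) => t.val % 2 = 0)).card = r - 1 := by
  rw [Finset.card_eq_sum_ones, sum_fin_filter (fun j => j % 2 = 0) (fun _ => (1 : ℕ))]
  have h2 : 2 * r - 2 = 2 * (r - 1) := by omega
  rw [Finset.sum_congr rfl (fun j hj => by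
    rw [dif_pos (Finset.mem_range.mp (Finset.mem_filter.mp hj).1)])]
  rw [← Finset.card_eq_sum_ones, h2, filter_even_range,
    Finset.card_image_of_injective _ (fun x y h => by omega), Finset.card_range]

/-- Exponent vector of `evenEProd`. -/
noncomputable def epsE (d r : ℕ) : EVar d r →₀ ℕ :=
  ∑ t ∈ Finset.univ.filter (fun t : Fin (2 * r - 2) => t.val % 2 = 1),
    Finsupp.single (EVar.e t) 1

/-- Exponent vector of `oddEProd`. -/
noncomputable def epsO (d r : ℕ) : EVar d r →₀ ℕ :=
  ∑ t ∈ Finset.univ.filter (fun t : Fin (2 * r - 2) => t.val % 2 = 0),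
    Finsupp.single (EVar.e t) 1

lemma evenEProd_eq : evenEProd k d r = monomial (epsE d r) 1 := by
  rw [evenEProd, prod_X_eq_monomial, epsE]

lemma oddEProd_eq : oddEProd k d r = monomial (epsO d r) 1 := by
  rw [oddEProd, prod_X_eq_monomial, epsO]

lemma epsE_apply_e (t : Fin (2 * r - 2)) :
    epsE d r (EVar.e t) = if t.val % 2 = 1 then 1 else 0 := by
  rw [epsE, Finset.sum_apply']
  rw [Finset.sum_congr rfl (fun t' _ => Finsupp.single_apply)]
  simp only [EVar.e.injEq]
  rw [Finset.sum_ite_eq' _ t (fun _ => (1:ℕ))]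
  simp [Finset.mem_filter]

lemma epsE_apply_a (i : Fin d) : epsE d r (EVar.a i) = 0 := by
  rw [epsE, Finset.sum_apply']
  exact Finset.sum_eq_zero fun t' _ => by simp [Finsupp.single_apply]

lemma epsE_apply_b (i : Fin d) : epsE d r (EVar.b i) = 0 := by
  rw [epsE, Finset.sum_apply']
  exact Finset.sum_eq_zero fun t' _ => by simp [Finsupp.single_apply]

lemma epsO_apply_e (t : Fin (2 * r - 2)) :
    epsO d r (EVar.e t) = if t.val % 2 = 0 then 1 else 0 := by
  rw [epsO, Finset.sum_apply']
  rw [Finset.sum_congr rfl (fun t' _ => Finsupp.single_apply)]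
  simp only [EVar.e.injEq]
  rw [Finset.sum_ite_eq' _ t (fun _ => (1:ℕ))]
  simp [Finset.mem_filter]

lemma epsO_apply_a (i : Fin d) : epsO d r (EVar.a i) = 0 := by
  rw [epsO, Finset.sum_apply']
  exact Finset.sum_eq_zero fun t' _ => by simp [Finsupp.single_apply]

lemma epsO_apply_b (i : Fin d) : epsO d r (EVar.b i) = 0 := by
  rw [epsO, Finset.sum_apply']
  exact Finset.sum_eq_zero fun t' _ => by simp [Finsupp.single_apply]

lemma expDeg_finsetSum {σ τ : Type} (s : Finset τ) (h : τ → (σ →₀ ℕ)) :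
    expDeg (∑ x ∈ s, h x) = ∑ x ∈ s, expDeg (h x) := by
  simp only [expDeg_eq_hom, map_sum]

lemma expDeg_epsE (hr : 3 ≤ r) : expDeg (epsE d r) = r - 1 := by
  rw [epsE, expDeg_finsetSum]
  rw [Finset.sum_congr rfl (fun t _ => expDeg_single _ 1), ← Finset.card_eq_sum_ones,
    card_filter_odd hr]

lemma expDeg_epsO (hr : 3 ≤ r) : expDeg (epsO d r) = r - 1 := by
  rw [epsO, expDeg_finsetSum]
  rw [Finset.sum_congr rfl (fun t _ => expDeg_single _ 1), ← Finset.card_eq_sum_ones,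
    card_filter_even hr]

end Aux4
section Aux5
variable {k : Type} [Field k] {d r : ℕ}

/-- `φ(e_{j+1})` extended to all of `ℕ`. -/
noncomputable def phiE (k : Type) [Field k] (d r : ℕ) (j : ℕ) : MvPolynomial (Vert d r) k :=
  if h : j < 2 * r - 2 then edgeImage k d r (.e ⟨j, h⟩) else 1

/-- `z`-variables extended to all of `ℕ`. -/
noncomputable def zX (k : Type) [Field k] (d r : ℕ) (s : ℕ) : MvPolynomial (Vert d r) k :=
  if h : s < 2 * r - 3 then X (Vert.z ⟨s, h⟩) else 1

lemma phiE_middle (hr : 3 ≤ r) {j : ℕ} (h0 : j ≠ 0) (hlt : j < 2 * r - 3) :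
    phiE k d r j = zX k d r (j - 1) * zX k d r j := by
  rw [phiE, dif_pos (by omega : j < 2 * r - 2), edgeImage, zX, zX,
    dif_pos (by omega : j - 1 < 2 * r - 3), dif_pos hlt]
  rw [dif_neg (by omega : ¬(j = 0)), dif_neg (by omega : ¬(j = 2 * r - 3))]

lemma phiE_zero (hr : 3 ≤ r) : phiE k d r 0 = X Vert.x1 * zX k d r 0 := by
  rw [phiE, dif_pos (by omega : 0 < 2 * r - 2), edgeImage, zX,
    dif_pos (by omega : (0:ℕ) < 2 * r - 3)]
  rw [dif_pos rfl, dif_neg (by omega : ¬((0:ℕ) = 2 * r - 3))]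

lemma phiE_last (hr : 3 ≤ r) : phiE k d r (2 * r - 3) = zX k d r (2 * r - 4) * X Vert.x2 := by
  rw [phiE, dif_pos (by omega : 2 * r - 3 < 2 * r - 2), edgeImage, zX,
    dif_pos (by omega : 2 * r - 4 < 2 * r - 3)]
  rw [dif_neg (by omega : ¬(2 * r - 3 = 0)), dif_pos rfl]
  simp only [show 2 * r - 3 - 1 = 2 * r - 4 from by omega]

lemma prodE_even (hr : 3 ≤ r) :
    ∀ m : ℕ, 1 ≤ m → m ≤ r - 1 →
      ∏ j ∈ Finset.range m, phiE k d r (2 * j) =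
        X Vert.x1 * ∏ s ∈ Finset.range (2 * m - 1), zX k d r s := by
  intro m
  induction m with
  | zero => omega
  | succ m ih =>
    intro _ hub
    by_cases hm : m = 0
    · subst hm
      rw [Finset.prod_range_one, mul_zero, phiE_zero hr]
      norm_num
    · have h1 : 1 ≤ m := by omega
      have h2 : m ≤ r - 1 := by omega
      rw [Finset.prod_range_succ, ih h1 h2]
      rw [phiE_middle hr (by omega) (by omega)]
      have h3 : 2 * (m + 1) - 1 = (2 * m - 1) + 1 + 1 := by omega
      have h4 : 2 * m - 1 + 1 = 2 * m := by omega
      rw [h3, Finset.prod_range_succ, Finset.prod_range_succ, h4]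
      have h5 : 2 * m - 1 = 2 * m - 1 := rfl
      ring

lemma prodE_odd (hr : 3 ≤ r) :
    ∀ m : ℕ, m ≤ r - 2 →
      ∏ j ∈ Finset.range m, phiE k d r (2 * j + 1) =
        ∏ s ∈ Finset.range (2 * m), zX k d r s := by
  intro m
  induction m with
  | zero => simp
  | succ m ih =>
    intro hub
    rw [Finset.prod_range_succ, ih (by omega)]
    rw [phiE_middle hr (by omega) (by omega)]
    have h3 : 2 * (m + 1) = (2 * m) + 1 + 1 := by omega
    have h4 : 2 * m + 1 - 1 = 2 * m := by omega
    rw [h3, Finset.prod_range_succ, Finset.prod_range_succ, h4]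
    ring

lemma aeval_oddEProd (hr : 3 ≤ r) :
    aeval (edgeImage k d r) (oddEProd k d r) =
      X Vert.x1 * ∏ s ∈ Finset.range (2 * r - 3), zX k d r s := by
  rw [oddEProd, map_prod]
  have h1 : ∀ t ∈ Finset.univ.filter (fun t : Fin (2 * r - 2) => t.val % 2 = 0),
      aeval (edgeImage k d r) (X (EVar.e t) : MvPolynomial (EVar d r) k) =
        edgeImage k d r (EVar.e t) := fun t _ => aeval_X _ _
  rw [Finset.prod_congr rfl h1]
  rw [prod_fin_filter (fun j => j % 2 = 0) (fun t => edgeImage k d r (EVar.e t))]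
  have h2 : 2 * r - 2 = 2 * (r - 1) := by omega
  have h3 : ∀ j ∈ (Finset.range (2 * r - 2)).filter (fun j => j % 2 = 0),
      (if h : j < 2 * r - 2 then edgeImage k d r (EVar.e ⟨j, h⟩) else 1) = phiE k d r j :=
    fun j _ => rfl
  rw [Finset.prod_congr rfl h3, h2, filter_even_range,
    Finset.prod_image (fun x _ y _ h => by omega)]
  have heq := prodE_even (k := k) (d := d) hr (r - 1) (by omega) le_rfl
  rw [show 2 * (r - 1) - 1 = 2 * r - 3 from by omega] at heq
  rw [heq]

lemma aeval_evenEProd (hr : 3 ≤ r) :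
    aeval (edgeImage k d r) (evenEProd k d r) =
      X Vert.x2 * ∏ s ∈ Finset.range (2 * r - 3), zX k d r s := by
  rw [evenEProd, map_prod]
  have h1 : ∀ t ∈ Finset.univ.filter (fun t : Fin (2 * r - 2) => t.val % 2 = 1),
      aeval (edgeImage k d r) (X (EVar.e t) : MvPolynomial (EVar d r) k) =
        edgeImage k d r (EVar.e t) := fun t _ => aeval_X _ _
  rw [Finset.prod_congr rfl h1]
  rw [prod_fin_filter (fun j => j % 2 = 1) (fun t => edgeImage k d r (EVar.e t))]
  have h2 : 2 * r - 2 = 2 * (r - 1) := by omega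
  have h3 : ∀ j ∈ (Finset.range (2 * r - 2)).filter (fun j => j % 2 = 1),
      (if h : j < 2 * r - 2 then edgeImage k d r (EVar.e ⟨j, h⟩) else 1) = phiE k d r j :=
    fun j _ => rfl
  rw [Finset.prod_congr rfl h3, h2, filter_odd_range,
    Finset.prod_image (fun x _ y _ h => by omega)]
  have hsplit : r - 1 = (r - 2) + 1 := by omega
  rw [hsplit, Finset.prod_range_succ, prodE_odd hr (r - 2) le_rfl]
  have hlast : 2 * (r - 2) + 1 = 2 * r - 3 := by omega
  rw [hlast, phiE_last hr]
  have hz : 2 * r - 3 = (2 * r - 4) + 1 := by omega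
  conv_rhs => rw [hz, Finset.prod_range_succ]
  have h4 : 2 * (r - 2) = 2 * r - 4 := by omega
  rw [h4]
  ring

lemma binom_ab_mem (i j : Fin d) :
    (X (EVar.a i) * X (EVar.b j) - X (EVar.a j) * X (EVar.b i)
      : MvPolynomial (EVar d r) k) ∈ toricIdealGrd k d r := by
  rw [toricIdealGrd, RingHom.mem_ker]
  simp only [AlgHom.toRingHom_eq_coe, RingHom.coe_coe, map_sub, map_mul, aeval_X, edgeImage]
  ring

lemma binom_h_mem (hr : 3 ≤ r) (i : Fin d) :
    (X (EVar.a i) * evenEProd k d r - X (EVar.b i) * oddEProd k d r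
      : MvPolynomial (EVar d r) k) ∈ toricIdealGrd k d r := by
  rw [toricIdealGrd, RingHom.mem_ker]
  simp only [AlgHom.toRingHom_eq_coe, RingHom.coe_coe, map_sub, map_mul, aeval_X]
  rw [aeval_evenEProd hr, aeval_oddEProd hr]
  simp only [edgeImage]
  ring

end Aux5
section Aux6
variable {k : Type} [Field k] {d r : ℕ}

lemma XX_eq (x y : EVar d r) :
    (X x * X y : MvPolynomial (EVar d r) k) =
      monomial (Finsupp.single x 1 + Finsupp.single y 1) 1 := by
  have hX : ∀ v : EVar d r, (X v : MvPolynomial (EVar d r) k) =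
      monomial (Finsupp.single v 1) 1 := fun v => rfl
  rw [hX, hX, monomial_mul, one_mul]

lemma X_mul_monomial' (x : EVar d r) (η : EVar d r →₀ ℕ) :
    (X x : MvPolynomial (EVar d r) k) * monomial η 1 =
      monomial (Finsupp.single x 1 + η) 1 := by
  have hX : (X x : MvPolynomial (EVar d r) k) = monomial (Finsupp.single x 1) 1 := rfl
  rw [hX, monomial_mul, one_mul]

lemma grevlex_ab {i j : Fin d} (hij : j < i) :
    grevlexLT (rankGrd d r)
      (Finsupp.single (EVar.a j) 1 + Finsupp.single (EVar.b i) 1)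
      (Finsupp.single (EVar.a i) 1 + Finsupp.single (EVar.b j) 1) := by
  have hji : j ≠ i := hij.ne
  have hij' : i ≠ j := hij.ne'
  right
  refine ⟨?_, EVar.b i, ?_, ?_⟩
  · rw [expDeg_add, expDeg_add, expDeg_single, expDeg_single, expDeg_single, expDeg_single]
  · simp [Finsupp.single_apply, hji]
  · intro y hy
    cases y with
    | a i' => exfalso; have := i'.isLt; simp only [rankGrd] at hy; omega
    | e t => exfalso; have := t.isLt; simp only [rankGrd] at hy; omega
    | b j' =>
      simp only [rankGrd] at hy
      have h1 : i ≠ j' := by intro h; subst h; omega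
      have h2 : j ≠ j' := by intro h; subst h; omega
      simp [Finsupp.single_apply, h1, h2]

lemma grevlex_h (hr : 3 ≤ r) (i : Fin d) :
    grevlexLT (rankGrd d r)
      (Finsupp.single (EVar.b i) 1 + epsO d r)
      (Finsupp.single (EVar.a i) 1 + epsE d r) := by
  right
  refine ⟨?_, EVar.b i, ?_, ?_⟩
  · rw [expDeg_add, expDeg_add, expDeg_single, expDeg_single, expDeg_epsE hr, expDeg_epsO hr]
  · rw [Finsupp.add_apply, Finsupp.add_apply, epsE_apply_b, epsO_apply_b]
    simp [Finsupp.single_apply]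
  · intro y hy
    cases y with
    | a i' => exfalso; have := i'.isLt; simp only [rankGrd] at hy; omega
    | e t => exfalso; have := t.isLt; simp only [rankGrd] at hy; omega
    | b j' =>
      simp only [rankGrd] at hy
      have h1 : i ≠ j' := by intro h; subst h; omega
      rw [Finsupp.add_apply, Finsupp.add_apply, epsE_apply_b, epsO_apply_b]
      simp [Finsupp.single_apply, h1]

lemma binom_leading {μ1 μ2 : EVar d r →₀ ℕ} (hne : μ1 ≠ μ2)
    (hgl : grevlexLT (rankGrd d r) μ2 μ1)
    {f : MvPolynomial (EVar d r) k} (hfI : f ∈ toricIdealGrd k d r)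
    (hfeq : f = monomial μ1 1 - monomial μ2 1) :
    (monomial μ1 (1:k)) ∈ initialIdeal (rankGrd d r) (toricIdealGrd k d r) := by
  subst hfeq
  have hcoeff : ∀ ν, coeff ν ((monomial μ1 (1:k)) - monomial μ2 1) =
      (if μ1 = ν then (1:k) else 0) - (if μ2 = ν then 1 else 0) := fun ν => by
    rw [MvPolynomial.coeff_sub, coeff_monomial, coeff_monomial]
  have hc1 : coeff μ1 ((monomial μ1 (1:k)) - monomial μ2 1) = 1 := by
    rw [hcoeff, if_pos rfl, if_neg (Ne.symm hne), sub_zero]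
  apply Ideal.subset_span
  refine ⟨monomial μ1 1 - monomial μ2 1, hfI, ?_, μ1, ?_, ?_, rfl⟩
  · intro h
    exact one_ne_zero (by rw [← hc1, h, coeff_zero])
  · rw [MvPolynomial.mem_support_iff, hc1]
    exact one_ne_zero
  · intro ν hν hνμ
    rw [MvPolynomial.mem_support_iff, hcoeff, if_neg (fun h => hνμ h.symm), zero_sub] at hν
    by_cases h2 : μ2 = ν
    · subst h2; exact hgl
    · rw [if_neg h2, neg_zero] at hν
      exact absurd rfl hν

end Aux6
/-- For `r ≥ 3` and `d ≥ 2`, with respect to the graded reverse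
lexicographic order with `a_1 > ⋯ > a_d > e_1 > ⋯ > e_{2r-2} > b_1 > ⋯ > b_d`, the
initial ideal of the toric ideal `I_{G_{r,d}}` is the monomial ideal generated by
`F_d ∪ H_{r,d} = {a_i b_j : 1 ≤ j < i ≤ d} ∪ {a_i e_2 e_4 ⋯ e_{2r-2} : 1 ≤ i ≤ d}`. -/
theorem initial_ideal_Grd (k : Type) [Field k] (d r : ℕ) (hd : 2 ≤ d) (hr : 3 ≤ r) :
    initialIdeal (rankGrd d r) (toricIdealGrd k d r) =
      Ideal.span
        ({p | ∃ i j : Fin d, j < i ∧ p = X (EVar.a i) * X (EVar.b j)} ∪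
         {p | ∃ i : Fin d, p = X (EVar.a i) * evenEProd k d r}) := by
  apply le_antisymm
  · -- `in(I) ⊆ (F_d ∪ H_{r,d})`
    rw [initialIdeal]
    apply Ideal.span_le.mpr
    rintro p ⟨f, hfI, hf0, μ, hμ, hlead, rfl⟩
    by_cases hF : ∃ i j : Fin d, j < i ∧ μ (EVar.a i) ≠ 0 ∧ μ (EVar.b j) ≠ 0
    · obtain ⟨i, j, hij, hai, hbj⟩ := hF
      set η := Finsupp.single (EVar.a i) 1 + Finsupp.single (EVar.b j) 1 with hη
      have hle : η ≤ μ := by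
        rw [Finsupp.le_def]
        intro x
        rw [hη, Finsupp.add_apply, Finsupp.single_apply, Finsupp.single_apply]
        split_ifs with h1 h2 h2
        · exfalso; rw [← h1] at h2; exact nomatch h2
        · rw [← h1]; omega
        · rw [← h2]; omega
        · omega
      have hmono : monomial μ (1:k) =
          monomial (μ - η) 1 * (X (EVar.a i) * X (EVar.b j)) := by
        rw [XX_eq, ← hη, monomial_mul, one_mul, tsub_add_cancel_of_le hle]
      rw [hmono]
      exact Ideal.mul_mem_left _ _
        (Ideal.subset_span (Or.inl ⟨i, j, hij, rfl⟩))
    · by_cases hH : ∃ i : Fin d, μ (EVar.a i) ≠ 0 ∧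
          ∀ t : Fin (2 * r - 2), t.val % 2 = 1 → μ (EVar.e t) ≠ 0
      · obtain ⟨i, hai, hall⟩ := hH
        set η := Finsupp.single (EVar.a i) 1 + epsE d r with hη
        have hle : η ≤ μ := by
          rw [Finsupp.le_def]
          intro x
          rw [hη, Finsupp.add_apply]
          cases x with
          | a i' =>
            rw [epsE_apply_a, Finsupp.single_apply]
            split_ifs with h1
            · rw [EVar.a.injEq] at h1; subst h1; omega
            · omega
          | b i' =>
            rw [epsE_apply_b, Finsupp.single_apply]
            rw [if_neg (show (EVar.a i : EVar d r) ≠ EVar.b i' from fun h => nomatch h)]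
            omega
          | e t =>
            rw [epsE_apply_e, Finsupp.single_apply,
              if_neg (show (EVar.a i : EVar d r) ≠ EVar.e t from fun h => nomatch h)]
            split_ifs with h1
            · have := hall t h1; omega
            · omega
        have hmono : monomial μ (1:k) =
            monomial (μ - η) 1 * (X (EVar.a i) * evenEProd k d r) := by
          rw [evenEProd_eq, X_mul_monomial', ← hη, monomial_mul, one_mul,
            tsub_add_cancel_of_le hle]
        rw [hmono]
        exact Ideal.mul_mem_left _ _
          (Ideal.subset_span (Or.inr ⟨i, rfl⟩))
      · -- `μ` is a standard monomial: contradiction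
        exfalso
        push_neg at hF hH
        have hker : aeval (edgeImage k d r) f = 0 := by
          have h := hfI
          rw [toricIdealGrd, RingHom.mem_ker] at h
          exact h
        obtain ⟨ν, hν, hνμ, hWν⟩ := exists_same_Wt hker hμ
        have S1 : ∀ i j : Fin d, j < i → μ (EVar.a i) = 0 ∨ μ (EVar.b j) = 0 := by
          intro i j hij
          by_cases h : μ (EVar.a i) = 0
          · exact Or.inl h
          · exact Or.inr (hF i j hij h)
        have S2 : ∀ i : Fin d, μ (EVar.a i) ≠ 0 →
            ∃ t : Fin (2 * r - 2), t.val % 2 = 1 ∧ μ (EVar.e t) = 0 := fun i hi => hH i hi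
        have h1 := standard_lt hr (fun he => hνμ he.symm) hWν.symm S1 S2
        exact grevlexLT_asymm rankGrd_inj h1 (hlead ν hν hνμ)
  · -- `(F_d ∪ H_{r,d}) ⊆ in(I)`
    apply Ideal.span_le.mpr
    intro p hp
    rcases hp with ⟨i, j, hij, rfl⟩ | ⟨i, rfl⟩
    · -- F family
      have hne : (Finsupp.single (EVar.a i) 1 + Finsupp.single (EVar.b j) 1
            : EVar d r →₀ ℕ) ≠
          Finsupp.single (EVar.a j) 1 + Finsupp.single (EVar.b i) 1 := by
        intro h
        have h2 := DFunLike.congr_fun h (EVar.a i)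
        rw [Finsupp.add_apply, Finsupp.add_apply, Finsupp.single_apply, Finsupp.single_apply,
          Finsupp.single_apply, Finsupp.single_apply] at h2
        rw [if_pos rfl, if_neg (show (EVar.b j : EVar d r) ≠ EVar.a i from fun h' => nomatch h'),
          if_neg (by rw [EVar.a.injEq]; exact hij.ne), if_neg (show (EVar.b i : EVar d r) ≠ EVar.a i from fun h' => nomatch h')]
          at h2
        exact one_ne_zero h2
      have hfeq : (X (EVar.a i) * X (EVar.b j) - X (EVar.a j) * X (EVar.b i)
            : MvPolynomial (EVar d r) k) =
          monomial (Finsupp.single (EVar.a i) 1 + Finsupp.single (EVar.b j) 1) 1 -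
          monomial (Finsupp.single (EVar.a j) 1 + Finsupp.single (EVar.b i) 1) 1 := by
        rw [XX_eq, XX_eq]
      rw [XX_eq]
      exact binom_leading hne (grevlex_ab hij) (binom_ab_mem i j) hfeq
    · -- H family
      have hne : Finsupp.single (EVar.a i) 1 + epsE d r ≠
          Finsupp.single (EVar.b i) 1 + epsO d r := by
        intro h
        have h2 := DFunLike.congr_fun h (EVar.a i)
        rw [Finsupp.add_apply, Finsupp.add_apply, epsE_apply_a, epsO_apply_a,
          Finsupp.single_apply, Finsupp.single_apply] at h2
        rw [if_pos rfl, if_neg (show (EVar.b i : EVar d r) ≠ EVar.a i from fun h' => nomatch h')] at h2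
        exact one_ne_zero h2
      have hfeq : (X (EVar.a i) * evenEProd k d r - X (EVar.b i) * oddEProd k d r
            : MvPolynomial (EVar d r) k) =
          monomial (Finsupp.single (EVar.a i) 1 + epsE d r) 1 -
          monomial (Finsupp.single (EVar.b i) 1 + epsO d r) 1 := by
        rw [evenEProd_eq, oddEProd_eq, X_mul_monomial', X_mul_monomial']
      rw [evenEProd_eq, X_mul_monomial']
      exact binom_leading hne (grevlex_h hr i) (binom_h_mem hr i) hfeq
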